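/- Suppose (ᾱ, β̄) ≠ (0, 0). Then there exists an RCV solution for (ᾱ, β̄) with θ > 0 if and only if there exist μ > 0 and an extended regular CGLP solution whose (α, β)-component equals (μᾱ, μβ̄). -/

import Mathlib

open Matrix

/-- Rank of the submatrix of `A` with rows indexed by `N`. -/
noncomputable def subRank {q n : ℕ} (A : Matrix (Fin q) (Fin n) ℝ) (N : Finset (Fin q)) : ℕ :=
  (A.submatrix (fun i : {x // x ∈ N} => (i : Fin q)) id).rank

open Classical in
/-- The support `N(u)` of a family of multipliers `u = (u^t)_{t ∈ T}`. -/
noncomputable def supp {q : ℕ} {T : Type} [Fintype T] (u : T → Fin q → ℝ) : Finset (Fin q) :=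
  Finset.univ.filter fun j => ∃ t, 0 < u t j

/-- A CGLP solution for the data `A, b, D, d`. -/
def IsCGLP {q n r : ℕ} {T : Type} [Fintype T]
    (A : Matrix (Fin q) (Fin n) ℝ) (b : Fin q → ℝ)
    (D : T → Matrix (Fin r) (Fin n) ℝ) (d : T → Fin r → ℝ)
    (α : Fin n → ℝ) (β : ℝ) (u : T → Fin q → ℝ) (v : T → Fin r → ℝ) : Prop :=
  (∀ t, α = Matrix.vecMul (u t) A + Matrix.vecMul (v t) (D t)) ∧
  (∀ t, β = u t ⬝ᵥ b + v t ⬝ᵥ d t) ∧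
  (∀ t j, 0 ≤ u t j) ∧ (∀ t i, 0 ≤ v t i) ∧
  (∑ t, (∑ j, u t j + ∑ i, v t i)) = 1

/-- An extended regular CGLP solution: a CGLP solution whose submatrix of `A` on the
rows in the support `N(u)` has full row rank. -/
noncomputable def IsExtReg {q n r : ℕ} {T : Type} [Fintype T]
    (A : Matrix (Fin q) (Fin n) ℝ) (b : Fin q → ℝ)
    (D : T → Matrix (Fin r) (Fin n) ℝ) (d : T → Fin r → ℝ)
    (α : Fin n → ℝ) (β : ℝ) (u : T → Fin q → ℝ) (v : T → Fin r → ℝ) : Prop :=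
  IsCGLP A b D d α β u v ∧ subRank A (supp u) = (supp u).card

/-- An RCV solution for the cut `(ᾱ, β̄)`. -/
def IsRCV {q n r : ℕ} {T : Type} [Fintype T]
    (A : Matrix (Fin q) (Fin n) ℝ) (b : Fin q → ℝ)
    (D : T → Matrix (Fin r) (Fin n) ℝ) (d : T → Fin r → ℝ)
    (αbar : Fin n → ℝ) (βbar : ℝ)
    (θ : ℝ) (δ : Fin q → ℝ) (u : T → Fin q → ℝ) (v : T → Fin r → ℝ) : Prop :=
  0 ≤ θ ∧ θ ≤ 1 ∧ (∀ j, δ j = 0 ∨ δ j = 1) ∧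
  (∀ t j, 0 ≤ u t j) ∧ (∀ t i, 0 ≤ v t i) ∧
  (∀ t, θ • αbar = Matrix.vecMul (u t) A + Matrix.vecMul (v t) (D t)) ∧
  (∀ t, θ * βbar = u t ⬝ᵥ b + v t ⬝ᵥ d t) ∧
  (∀ t j, u t j ≤ δ j) ∧
  (∑ j, δ j) ≤ (n : ℝ) ∧
  (∀ N : Finset (Fin q), ∑ j ∈ N, δ j ≤ (subRank A N : ℝ))

/- ### Auxiliary lemmas -/

lemma subRank_eq_finrank {q n : ℕ} (A : Matrix (Fin q) (Fin n) ℝ) (N : Finset (Fin q)) :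
    subRank A N =
      Module.finrank ℝ (Submodule.span ℝ (Set.range fun i : {x // x ∈ N} => A (i : Fin q))) := by
  unfold subRank
  have hrange : Set.range (A.submatrix (fun i : {x // x ∈ N} => (i : Fin q)) id) =
      Set.range fun i : {x // x ∈ N} => A (i : Fin q) := by
    ext w
    constructor
    · rintro ⟨i, rfl⟩; exact ⟨i, rfl⟩
    · rintro ⟨i, rfl⟩; exact ⟨i, rfl⟩
  rw [Matrix.rank_eq_finrank_span_row, ← hrange]
  rfl

lemma subRank_le_card {q n : ℕ} (A : Matrix (Fin q) (Fin n) ℝ) (N : Finset (Fin q)) :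
    subRank A N ≤ N.card := by
  have := Matrix.rank_le_card_height (A.submatrix (fun i : {x // x ∈ N} => (i : Fin q)) id)
  simpa [subRank, Fintype.card_coe] using this

lemma subRank_le_width {q n : ℕ} (A : Matrix (Fin q) (Fin n) ℝ) (N : Finset (Fin q)) :
    subRank A N ≤ n := by
  have := Matrix.rank_le_card_width (A.submatrix (fun i : {x // x ∈ N} => (i : Fin q)) id)
  simpa [subRank] using this

lemma linearIndependent_of_subRank_eq {q n : ℕ} (A : Matrix (Fin q) (Fin n) ℝ)
    {S : Finset (Fin q)} (h : subRank A S = S.card) :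
    LinearIndependent ℝ (fun i : {x // x ∈ S} => A (i : Fin q)) := by
  rw [linearIndependent_iff_card_eq_finrank_span]
  rw [Fintype.card_coe]
  rw [subRank_eq_finrank] at h
  exact h.symm

lemma card_inter_le_subRank {q n : ℕ} (A : Matrix (Fin q) (Fin n) ℝ) {S : Finset (Fin q)}
    (hS : LinearIndependent ℝ (fun i : {x // x ∈ S} => A (i : Fin q)))
    (N : Finset (Fin q)) : (N ∩ S).card ≤ subRank A N := by
  classical
  set f : {x // x ∈ N ∩ S} → {x // x ∈ S} :=
    fun i => ⟨(i : Fin q), (Finset.mem_inter.mp i.2).2⟩ with hf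
  have hfinj : Function.Injective f := by
    intro a b hab
    have : ((f a : {x // x ∈ S}) : Fin q) = ((f b : {x // x ∈ S}) : Fin q) :=
      congrArg Subtype.val hab
    exact Subtype.ext this
  have hli : LinearIndependent ℝ (fun i : {x // x ∈ N ∩ S} => A (i : Fin q)) := hS.comp f hfinj
  have hcard := linearIndependent_iff_card_eq_finrank_span.mp hli
  rw [Fintype.card_coe] at hcard
  rw [hcard, subRank_eq_finrank]
  apply Submodule.finrank_mono
  apply Submodule.span_mono
  rintro w ⟨i, rfl⟩
  exact ⟨⟨(i : Fin q), (Finset.mem_inter.mp i.2).1⟩, rfl⟩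

lemma supp_smul {q : ℕ} {T : Type} [Fintype T] (u : T → Fin q → ℝ) {c : ℝ} (hc : 0 < c) :
    supp (fun t j => c * u t j) = supp u := by
  unfold supp
  apply Finset.filter_congr
  intro j _
  simp only [eq_iff_iff]
  constructor
  · rintro ⟨t, ht⟩
    refine ⟨t, ?_⟩
    by_contra hle
    push_neg at hle
    nlinarith
  · rintro ⟨t, ht⟩; exact ⟨t, mul_pos hc ht⟩

/-- For `(ᾱ, β̄) ≠ (0, 0)`, there exists an RCV solution for `(ᾱ, β̄)`
with `θ > 0` if and only if some positive multiple `(μᾱ, μβ̄)` is the cut of an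
extended regular CGLP solution. -/
theorem stmt_8 {q n r : ℕ} {T : Type} [Fintype T] [Nonempty T]
    (hq : 0 < q) (hn : 0 < n) (hr : 0 < r)
    (A : Matrix (Fin q) (Fin n) ℝ) (b : Fin q → ℝ)
    (D : T → Matrix (Fin r) (Fin n) ℝ) (d : T → Fin r → ℝ)
    (αbar : Fin n → ℝ) (βbar : ℝ)
    (hne : ¬ (αbar = 0 ∧ βbar = 0)) :
    (∃ (θ : ℝ) (δ : Fin q → ℝ) (u : T → Fin q → ℝ) (v : T → Fin r → ℝ),
        IsRCV A b D d αbar βbar θ δ u v ∧ 0 < θ) ↔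
      (∃ μ : ℝ, 0 < μ ∧ ∃ (u : T → Fin q → ℝ) (v : T → Fin r → ℝ),
        IsExtReg A b D d (μ • αbar) (μ * βbar) u v) := by
  classical
  constructor
  · -- forward direction
    rintro ⟨θ, δ, u, v, ⟨hθ0, hθ1, hδ01, hu0, hv0, hα, hβ, huδ, hδn, hδrank⟩, hθpos⟩
    set s : ℝ := ∑ t, (∑ j, u t j + ∑ i, v t i) with hs
    have hterm0 : ∀ t, 0 ≤ ∑ j, u t j + ∑ i, v t i := fun t =>
      add_nonneg (Finset.sum_nonneg fun j _ => hu0 t j) (Finset.sum_nonneg fun i _ => hv0 t i)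
    have hs0 : 0 ≤ s := Finset.sum_nonneg fun t _ => hterm0 t
    have hspos : 0 < s := by
      rcases hs0.lt_or_eq with h | h
      · exact h
      · exfalso
        -- s = 0 ⇒ all multipliers vanish ⇒ αbar = 0 and βbar = 0
        have hall : ∀ t, (∑ j, u t j + ∑ i, v t i) = 0 := by
          intro t
          have := (Finset.sum_eq_zero_iff_of_nonneg (fun t _ => hterm0 t)).mp h.symm
          exact this t (Finset.mem_univ t)
        have huz : ∀ t, u t = 0 := by
          intro t
          have h1 : (∑ j, u t j) = 0 := by
            have := hall t
            have h2 : 0 ≤ ∑ j, u t j := Finset.sum_nonneg fun j _ => hu0 t j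
            have h3 : 0 ≤ ∑ i, v t i := Finset.sum_nonneg fun i _ => hv0 t i
            linarith
          funext j
          exact (Finset.sum_eq_zero_iff_of_nonneg (fun j _ => hu0 t j)).mp h1 j (Finset.mem_univ j)
        have hvz : ∀ t, v t = 0 := by
          intro t
          have h1 : (∑ i, v t i) = 0 := by
            have := hall t
            have h2 : 0 ≤ ∑ j, u t j := Finset.sum_nonneg fun j _ => hu0 t j
            have h3 : 0 ≤ ∑ i, v t i := Finset.sum_nonneg fun i _ => hv0 t i
            linarith
          funext i
          exact (Finset.sum_eq_zero_iff_of_nonneg (fun i _ => hv0 t i)).mp h1 i (Finset.mem_univ i)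
        obtain ⟨t0⟩ := (inferInstance : Nonempty T)
        have hαz : θ • αbar = 0 := by
          rw [hα t0, huz t0, hvz t0]
          simp [Matrix.zero_vecMul]
        have hβz : θ * βbar = 0 := by
          rw [hβ t0, huz t0, hvz t0]
          simp [zero_dotProduct]
        apply hne
        constructor
        · have := smul_eq_zero.mp hαz
          rcases this with h | h
          · exact absurd h (ne_of_gt hθpos)
          · exact h
        · rcases mul_eq_zero.mp hβz with h | h
          · exact absurd h (ne_of_gt hθpos)
          · exact h
    -- normalized solution
    refine ⟨θ / s, div_pos hθpos hspos,
      (fun t j => s⁻¹ * u t j), (fun t i => s⁻¹ * v t i), ?_, ?_⟩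
    · refine ⟨?_, ?_, ?_, ?_, ?_⟩
      · intro t
        beta_reduce
        have h1 : (fun j => s⁻¹ * u t j) = s⁻¹ • u t := by funext j; simp [smul_eq_mul]
        have h2 : (fun i => s⁻¹ * v t i) = s⁻¹ • v t := by funext i; simp [smul_eq_mul]
        rw [h1, h2, Matrix.smul_vecMul, Matrix.smul_vecMul, ← smul_add, ← hα t]
        rw [smul_smul, div_eq_inv_mul]
      · intro t
        beta_reduce
        have h1 : (fun j => s⁻¹ * u t j) = s⁻¹ • u t := by funext j; simp [smul_eq_mul]
        have h2 : (fun i => s⁻¹ * v t i) = s⁻¹ • v t := by funext i; simp [smul_eq_mul]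
        rw [h1, h2, smul_dotProduct, smul_dotProduct, ← smul_add, ← hβ t,
          smul_eq_mul]
        ring
      · intro t j; exact mul_nonneg (inv_nonneg.mpr hs0) (hu0 t j)
      · intro t i; exact mul_nonneg (inv_nonneg.mpr hs0) (hv0 t i)
      · beta_reduce
        have : (∑ t, (∑ j, s⁻¹ * u t j + ∑ i, s⁻¹ * v t i)) = s⁻¹ * s := by
          rw [hs, Finset.mul_sum]
          apply Finset.sum_congr rfl
          intro t _
          rw [mul_add, Finset.mul_sum, Finset.mul_sum]
        rw [this, inv_mul_cancel₀ (ne_of_gt hspos)]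
    · -- extended regularity
      have hsupp : supp (fun t j => s⁻¹ * u t j) = supp u :=
        supp_smul u (inv_pos.mpr hspos)
      rw [hsupp]
      -- every j in supp u has δ j = 1
      have hδ1 : ∀ j ∈ supp u, δ j = 1 := by
        intro j hj
        rw [supp, Finset.mem_filter] at hj
        obtain ⟨-, t, ht⟩ := hj
        rcases hδ01 j with h | h
        · exfalso; have := huδ t j; rw [h] at this; linarith
        · exact h
      have hsum : (∑ j ∈ supp u, δ j) = ((supp u).card : ℝ) := by
        rw [Finset.sum_congr rfl hδ1]
        simp
      have := hδrank (supp u)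
      rw [hsum] at this
      have hle : (supp u).card ≤ subRank A (supp u) := by exact_mod_cast this
      exact le_antisymm (subRank_le_card A (supp u)) hle
  · -- backward direction
    rintro ⟨μ, hμ, u, v, ⟨⟨hα, hβ, hu0, hv0, hnorm⟩, hreg⟩⟩
    have hli : LinearIndependent ℝ (fun i : {x // x ∈ supp u} => A (i : Fin q)) :=
      linearIndependent_of_subRank_eq A hreg
    -- each u t j ≤ 1 by normalization
    have hu1 : ∀ t j, u t j ≤ 1 := by
      intro t j
      rw [← hnorm]
      have h1 : u t j ≤ ∑ j', u t j' :=
        Finset.single_le_sum (fun j' _ => hu0 t j') (Finset.mem_univ j)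
      have h2 : (∑ j', u t j' + ∑ i, v t i) ≤ ∑ t', (∑ j', u t' j' + ∑ i, v t' i) :=
        Finset.single_le_sum (fun t' _ => add_nonneg (Finset.sum_nonneg fun j' _ => hu0 t' j')
          (Finset.sum_nonneg fun i _ => hv0 t' i)) (Finset.mem_univ t)
      have h3 : 0 ≤ ∑ i, v t i := Finset.sum_nonneg fun i _ => hv0 t i
      linarith
    -- u t j = 0 off the support
    have huz : ∀ t j, j ∉ supp u → u t j = 0 := by
      intro t j hj
      rw [supp, Finset.mem_filter] at hj
      push_neg at hj
      have := hj (Finset.mem_univ j) t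
      exact le_antisymm this (hu0 t j)
    set c : ℝ := (max 1 μ)⁻¹ with hc
    have hmaxpos : 0 < max 1 μ := lt_of_lt_of_le one_pos (le_max_left 1 μ)
    have hcpos : 0 < c := inv_pos.mpr hmaxpos
    have hc1 : c ≤ 1 := by
      rw [hc]
      rw [inv_le_one_iff₀]
      right; exact le_max_left 1 μ
    refine ⟨μ * c, fun j => if j ∈ supp u then 1 else 0,
      (fun t j => c * u t j), (fun t i => c * v t i), ⟨?_, ?_, ?_, ?_, ?_, ?_, ?_, ?_, ?_, ?_⟩,
      mul_pos hμ hcpos⟩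
    · exact le_of_lt (mul_pos hμ hcpos)
    · calc μ * c ≤ max 1 μ * c := by
            apply mul_le_mul_of_nonneg_right (le_max_right 1 μ) hcpos.le
        _ = 1 := mul_inv_cancel₀ (ne_of_gt hmaxpos)
    · intro j; by_cases h : j ∈ supp u <;> simp [h]
    · intro t j; exact mul_nonneg hcpos.le (hu0 t j)
    · intro t i; exact mul_nonneg hcpos.le (hv0 t i)
    · intro t
      beta_reduce
      have h1 : (fun j => c * u t j) = c • u t := by funext j; simp [smul_eq_mul]
      have h2 : (fun i => c * v t i) = c • v t := by funext i; simp [smul_eq_mul]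
      rw [h1, h2, Matrix.smul_vecMul, Matrix.smul_vecMul, ← smul_add, ← hα t,
        smul_smul, mul_comm c μ]
    · intro t
      beta_reduce
      have h1 : (fun j => c * u t j) = c • u t := by funext j; simp [smul_eq_mul]
      have h2 : (fun i => c * v t i) = c • v t := by funext i; simp [smul_eq_mul]
      rw [h1, h2, smul_dotProduct, smul_dotProduct, ← smul_add, ← hβ t,
        smul_eq_mul]
      ring
    · intro t j
      by_cases h : j ∈ supp u
      · simp only [h, if_pos]
        calc c * u t j ≤ 1 * u t j := by
              apply mul_le_mul_of_nonneg_right hc1 (hu0 t j)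
          _ = u t j := one_mul _
          _ ≤ 1 := hu1 t j
      · simp [h, huz t j h]
    · beta_reduce
      have : (∑ j, (if j ∈ supp u then (1:ℝ) else 0)) = ((supp u).card : ℝ) := by
        rw [Finset.sum_ite_mem]
        simp [Finset.univ_inter]
      rw [this]
      have h1 : (supp u).card ≤ n := hreg ▸ subRank_le_width A (supp u)
      exact_mod_cast h1
    · intro N
      beta_reduce
      have : (∑ j ∈ N, (if j ∈ supp u then (1:ℝ) else 0)) = ((N ∩ supp u).card : ℝ) := by
        rw [Finset.sum_ite_mem]
        simp
      rw [this]
      exact_mod_cast card_inter_le_subRank A hli N
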